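/- For every n ∈ ℕ, the probability of stopping by time n under p = α satisfies P_α(τ ≤ n) ≤ 2ε_n. -/

import Mathlib

open MeasureTheory ProbabilityTheory Filter Asymptotics
open scoped ENNReal

namespace SeqMC

variable {Ω : Type*} [MeasurableSpace Ω]

/-- Partial sums: `S n = X_1 + ⋯ + X_n`, where the i-th variable `X_i` is `X (i-1)`. -/
def S (X : ℕ → Ω → ℕ) (n : ℕ) (ω : Ω) : ℕ := ∑ i ∈ Finset.range n, X i ω

/-- `X` is an i.i.d. Bernoulli(p) sequence under the probability measure `P`. -/
structure IsBernoulliSeq (P : Measure Ω) (p : ℝ) (X : ℕ → Ω → ℕ) : Prop where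
  isProb : IsProbabilityMeasure P
  meas : ∀ i, Measurable (X i)
  bdd : ∀ i ω, X i ω ≤ 1
  indep : iIndepFun X P
  bern : ∀ i, P (X i ⁻¹' {1}) = ENNReal.ofReal p

/-- The walk stayed strictly between the boundaries at all steps `1 ≤ k ≤ n`, i.e. `τ > n`. -/
def notStopped (X : ℕ → Ω → ℕ) (U L : ℕ → ℤ) (n : ℕ) (ω : Ω) : Prop :=
  ∀ k, 1 ≤ k → k ≤ n → L k < (S X k ω : ℤ) ∧ (S X k ω : ℤ) < U k

/-- The event `τ ≤ n` and `S_τ ≥ U_τ`. -/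
def hitUpperBy (X : ℕ → Ω → ℕ) (U L : ℕ → ℤ) (n : ℕ) (ω : Ω) : Prop :=
  ∃ k, 1 ≤ k ∧ k ≤ n ∧ notStopped X U L (k - 1) ω ∧ U k ≤ (S X k ω : ℤ)

/-- The event `τ ≤ n` and `S_τ ≤ L_τ`. -/
def hitLowerBy (X : ℕ → Ω → ℕ) (U L : ℕ → ℤ) (n : ℕ) (ω : Ω) : Prop :=
  ∃ k, 1 ≤ k ∧ k ≤ n ∧ notStopped X U L (k - 1) ω ∧ (S X k ω : ℤ) ≤ L k

/-- The recursively defined boundaries `(U_n, L_n)`: `U_1 = 2`, `L_1 = -1` and for `n ≥ 2`,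
`U_n` is the least `j ∈ {1,2,…}` with `P_α(τ ≥ n, S_n ≥ j) + P_α(τ < n, S_τ ≥ U_τ) ≤ ε_n`,
`L_n` is the greatest `j ∈ ℤ` with `P_α(τ ≥ n, S_n ≤ j) + P_α(τ < n, S_τ ≤ L_τ) ≤ ε_n`.
Here `Pα` is the measure `P_α` and `εs` the spending sequence. -/
noncomputable def bnd (Pα : Measure Ω) (X : ℕ → Ω → ℕ) (εs : ℕ → ℝ) : ℕ → ℤ × ℤ
  | 0 => (2, -1)
  | 1 => (2, -1)
  | n + 2 =>
      let U : ℕ → ℤ := fun k => if h : k < n + 2 then (bnd Pα X εs k).1 else 0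
      let L : ℕ → ℤ := fun k => if h : k < n + 2 then (bnd Pα X εs k).2 else 0
      (sInf {j : ℤ | 1 ≤ j ∧
          Pα {ω | notStopped X U L (n + 1) ω ∧ j ≤ (S X (n + 2) ω : ℤ)} +
            Pα {ω | hitUpperBy X U L (n + 1) ω} ≤ ENNReal.ofReal (εs (n + 2))},
       sSup {j : ℤ |
          Pα {ω | notStopped X U L (n + 1) ω ∧ (S X (n + 2) ω : ℤ) ≤ j} +
            Pα {ω | hitLowerBy X U L (n + 1) ω} ≤ ENNReal.ofReal (εs (n + 2))})
  termination_by n => n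
  decreasing_by all_goals omega

/-- The upper boundary `U_n`. -/
noncomputable def Ub (Pα : Measure Ω) (X : ℕ → Ω → ℕ) (εs : ℕ → ℝ) (n : ℕ) : ℤ :=
  (bnd Pα X εs n).1

/-- The lower boundary `L_n`. -/
noncomputable def Lb (Pα : Measure Ω) (X : ℕ → Ω → ℕ) (εs : ℕ → ℝ) (n : ℕ) : ℤ :=
  (bnd Pα X εs n).2

/-- The stopping time `τ = inf {k ≥ 1 : S_k ≥ U_k or S_k ≤ L_k}`, with `0` encoding `τ = ∞`. -/
noncomputable def tau (Pα : Measure Ω) (X : ℕ → Ω → ℕ) (εs : ℕ → ℝ) (ω : Ω) : ℕ :=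
  sInf {k | 1 ≤ k ∧ ((S X k ω : ℤ) ≤ Lb Pα X εs k ∨ Ub Pα X εs k ≤ (S X k ω : ℤ))}

/-- `τ` as an extended nonneg real (`∞` when the algorithm never stops). -/
noncomputable def tauE (Pα : Measure Ω) (X : ℕ → Ω → ℕ) (εs : ℕ → ℝ) (ω : Ω) : ℝ≥0∞ :=
  if tau Pα X εs ω = 0 then ⊤ else (tau Pα X εs ω : ℝ≥0∞)

/-- The event `τ < ∞` and `S_τ ≥ U_τ`. -/
def hitsUpper (Pα : Measure Ω) (X : ℕ → Ω → ℕ) (εs : ℕ → ℝ) (ω : Ω) : Prop :=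
  tau Pα X εs ω ≠ 0 ∧ Ub Pα X εs (tau Pα X εs ω) ≤ (S X (tau Pα X εs ω) ω : ℤ)

/-- The event `τ < ∞` and `S_τ ≤ L_τ`. -/
def hitsLower (Pα : Measure Ω) (X : ℕ → Ω → ℕ) (εs : ℕ → ℝ) (ω : Ω) : Prop :=
  tau Pα X εs ω ≠ 0 ∧ (S X (tau Pα X εs ω) ω : ℤ) ≤ Lb Pα X εs (tau Pα X εs ω)

/-- The estimator `p̂ = S_τ/τ` (`= α` if `τ = ∞`). -/
noncomputable def phat (Pα : Measure Ω) (X : ℕ → Ω → ℕ) (εs : ℕ → ℝ) (α : ℝ) (ω : Ω) : ℝ :=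
  if tau Pα X εs ω = 0 then α
  else (S X (tau Pα X εs ω) ω : ℝ) / (tau Pα X εs ω)


lemma S_le_of_bdd {Ω : Type*} {X : ℕ → Ω → ℕ} (hbdd : ∀ i ω, X i ω ≤ 1) (n : ℕ) (ω : Ω) :
    S X n ω ≤ n := by
  calc S X n ω ≤ ∑ _i ∈ Finset.range n, 1 := Finset.sum_le_sum fun i _ => hbdd i ω
  _ = n := by simp

lemma notStopped_congr' {Ω : Type*} {X : ℕ → Ω → ℕ} {U L U' L' : ℕ → ℤ} {n : ℕ} {ω : Ω}
    (hU : ∀ k, 1 ≤ k → k ≤ n → U k = U' k) (hL : ∀ k, 1 ≤ k → k ≤ n → L k = L' k) :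
    notStopped X U L n ω ↔ notStopped X U' L' n ω := by
  constructor
  · intro h k h1 h2
    rw [← hU k h1 h2, ← hL k h1 h2]; exact h k h1 h2
  · intro h k h1 h2
    rw [hU k h1 h2, hL k h1 h2]; exact h k h1 h2

lemma hitUpperBy_congr' {Ω : Type*} {X : ℕ → Ω → ℕ} {U L U' L' : ℕ → ℤ} {n : ℕ} {ω : Ω}
    (hU : ∀ k, 1 ≤ k → k ≤ n → U k = U' k) (hL : ∀ k, 1 ≤ k → k ≤ n → L k = L' k) :
    hitUpperBy X U L n ω ↔ hitUpperBy X U' L' n ω := by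
  constructor
  · rintro ⟨k, h1, h2, hns, hs⟩
    refine ⟨k, h1, h2, ?_, ?_⟩
    · exact (notStopped_congr' (fun j hj1 hj2 => hU j hj1 (by omega))
        (fun j hj1 hj2 => hL j hj1 (by omega))).1 hns
    · rw [← hU k h1 h2]; exact hs
  · rintro ⟨k, h1, h2, hns, hs⟩
    refine ⟨k, h1, h2, ?_, ?_⟩
    · exact (notStopped_congr' (fun j hj1 hj2 => hU j hj1 (by omega))
        (fun j hj1 hj2 => hL j hj1 (by omega))).2 hns
    · rw [hU k h1 h2]; exact hs

lemma hitLowerBy_congr' {Ω : Type*} {X : ℕ → Ω → ℕ} {U L U' L' : ℕ → ℤ} {n : ℕ} {ω : Ω}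
    (hU : ∀ k, 1 ≤ k → k ≤ n → U k = U' k) (hL : ∀ k, 1 ≤ k → k ≤ n → L k = L' k) :
    hitLowerBy X U L n ω ↔ hitLowerBy X U' L' n ω := by
  constructor
  · rintro ⟨k, h1, h2, hns, hs⟩
    refine ⟨k, h1, h2, ?_, ?_⟩
    · exact (notStopped_congr' (fun j hj1 hj2 => hU j hj1 (by omega))
        (fun j hj1 hj2 => hL j hj1 (by omega))).1 hns
    · rw [← hL k h1 h2]; exact hs
  · rintro ⟨k, h1, h2, hns, hs⟩
    refine ⟨k, h1, h2, ?_, ?_⟩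
    · exact (notStopped_congr' (fun j hj1 hj2 => hU j hj1 (by omega))
        (fun j hj1 hj2 => hL j hj1 (by omega))).2 hns
    · rw [hL k h1 h2]; exact hs

lemma hit_bound {Ω : Type*} [MeasurableSpace Ω] (Pα : Measure Ω) (X : ℕ → Ω → ℕ) (εs : ℕ → ℝ)
    (hbdd : ∀ i ω, X i ω ≤ 1) (hmono : Monotone εs) (hnonneg : ∀ n, 0 ≤ εs n) :
    ∀ n : ℕ,
      Pα {ω | hitUpperBy X (Ub Pα X εs) (Lb Pα X εs) (n + 1) ω} ≤ ENNReal.ofReal (εs (n + 1)) ∧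
      Pα {ω | hitLowerBy X (Ub Pα X εs) (Lb Pα X εs) (n + 1) ω} ≤ ENNReal.ofReal (εs (n + 1)) := by
  intro n
  induction n with
  | zero =>
      constructor
      · have hset : {ω | hitUpperBy X (Ub Pα X εs) (Lb Pα X εs) 1 ω} = ∅ := by
          ext ω
          simp only [Set.mem_setOf_eq, Set.mem_empty_iff_false, iff_false]
          rintro ⟨k, h1, h2, -, hs⟩
          have hk : k = 1 := le_antisymm h2 h1
          subst hk
          have hU1 : Ub Pα X εs 1 = 2 := by unfold Ub; rw [bnd]
          rw [hU1] at hs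
          have hS : S X 1 ω ≤ 1 := S_le_of_bdd hbdd 1 ω
          omega
        rw [hset, measure_empty]; exact zero_le
      · have hset : {ω | hitLowerBy X (Ub Pα X εs) (Lb Pα X εs) 1 ω} = ∅ := by
          ext ω
          simp only [Set.mem_setOf_eq, Set.mem_empty_iff_false, iff_false]
          rintro ⟨k, h1, h2, -, hs⟩
          have hk : k = 1 := le_antisymm h2 h1
          subst hk
          have hL1 : Lb Pα X εs 1 = -1 := by unfold Lb; rw [bnd]
          rw [hL1] at hs
          omega
        rw [hset, measure_empty]; exact zero_le
  | succ n ih =>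
      -- truncated boundary functions used in the recursion
      let U' : ℕ → ℤ := fun k => if _h : k < n + 2 then (bnd Pα X εs k).1 else 0
      let L' : ℕ → ℤ := fun k => if _h : k < n + 2 then (bnd Pα X εs k).2 else 0
      have hagU : ∀ k, 1 ≤ k → k ≤ n + 1 → U' k = Ub Pα X εs k := by
        intro k _ h2
        simp only [U', dif_pos (by omega : k < n + 2)]; rfl
      have hagL : ∀ k, 1 ≤ k → k ≤ n + 1 → L' k = Lb Pα X εs k := by
        intro k _ h2
        simp only [L', dif_pos (by omega : k < n + 2)]; rfl
      have hnsEq : ∀ ω, notStopped X U' L' (n + 1) ω ↔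
          notStopped X (Ub Pα X εs) (Lb Pα X εs) (n + 1) ω :=
        fun ω => notStopped_congr' hagU hagL
      have hupEq : {ω | hitUpperBy X U' L' (n + 1) ω} =
          {ω | hitUpperBy X (Ub Pα X εs) (Lb Pα X εs) (n + 1) ω} := by
        ext ω; exact hitUpperBy_congr' hagU hagL
      have hloEq : {ω | hitLowerBy X U' L' (n + 1) ω} =
          {ω | hitLowerBy X (Ub Pα X εs) (Lb Pα X εs) (n + 1) ω} := by
        ext ω; exact hitLowerBy_congr' hagU hagL
      have hεsle : ENNReal.ofReal (εs (n + 1)) ≤ ENNReal.ofReal (εs (n + 2)) :=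
        ENNReal.ofReal_le_ofReal (hmono (by omega))
      have hbnd : bnd Pα X εs (n + 2) =
          (sInf {j : ℤ | 1 ≤ j ∧
              Pα {ω | notStopped X U' L' (n + 1) ω ∧ j ≤ (S X (n + 2) ω : ℤ)} +
                Pα {ω | hitUpperBy X U' L' (n + 1) ω} ≤ ENNReal.ofReal (εs (n + 2))},
           sSup {j : ℤ |
              Pα {ω | notStopped X U' L' (n + 1) ω ∧ (S X (n + 2) ω : ℤ) ≤ j} +
                Pα {ω | hitLowerBy X U' L' (n + 1) ω} ≤ ENNReal.ofReal (εs (n + 2))}) := by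
        rw [bnd]
      set SU : Set ℤ := {j : ℤ | 1 ≤ j ∧
          Pα {ω | notStopped X U' L' (n + 1) ω ∧ j ≤ (S X (n + 2) ω : ℤ)} +
            Pα {ω | hitUpperBy X U' L' (n + 1) ω} ≤ ENNReal.ofReal (εs (n + 2))} with hSU
      set SL : Set ℤ := {j : ℤ |
          Pα {ω | notStopped X U' L' (n + 1) ω ∧ (S X (n + 2) ω : ℤ) ≤ j} +
            Pα {ω | hitLowerBy X U' L' (n + 1) ω} ≤ ENNReal.ofReal (εs (n + 2))} with hSL
      have hUval : Ub Pα X εs (n + 2) = sInf SU := by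
        unfold Ub; rw [hbnd]
      have hLval : Lb Pα X εs (n + 2) = sSup SL := by
        unfold Lb; rw [hbnd]
      -- SU is nonempty and bounded below
      have hSUne : SU.Nonempty := by
        refine ⟨(n : ℤ) + 3, by omega, ?_⟩
        have hempty : {ω | notStopped X U' L' (n + 1) ω ∧ ((n : ℤ) + 3) ≤ (S X (n + 2) ω : ℤ)}
            = ∅ := by
          ext ω
          simp only [Set.mem_setOf_eq, Set.mem_empty_iff_false, iff_false, not_and]
          intro _
          have hS : S X (n + 2) ω ≤ n + 2 := S_le_of_bdd hbdd _ ω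
          omega
        rw [hempty, measure_empty, zero_add, hupEq]
        exact le_trans ih.1 hεsle
      have hSUbdd : BddBelow SU := ⟨1, fun j hj => hj.1⟩
      have hUmem : sInf SU ∈ SU := Int.csInf_mem hSUne hSUbdd
      -- SL is nonempty
      have hSLne : SL.Nonempty := by
        refine ⟨-1, ?_⟩
        have hempty : {ω | notStopped X U' L' (n + 1) ω ∧ (S X (n + 2) ω : ℤ) ≤ -1} = ∅ := by
          ext ω
          simp only [Set.mem_setOf_eq, Set.mem_empty_iff_false, iff_false, not_and]
          intro _
          omega
        rw [hSL]
        simp only [Set.mem_setOf_eq]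
        rw [hempty, measure_empty, zero_add, hloEq]
        exact le_trans ih.2 hεsle
      have hLmem : sSup SL ∈ SL := by
        by_cases hb : BddAbove SL
        · exact Int.csSup_mem hSLne hb
        · rw [Int.csSup_of_not_bddAbove hb]
          rw [not_bddAbove_iff] at hb
          obtain ⟨j, hj, hj0⟩ := hb 0
          rw [hSL] at hj ⊢
          simp only [Set.mem_setOf_eq] at hj ⊢
          refine le_trans (add_le_add_left (measure_mono ?_) _) hj
          intro ω hω
          exact ⟨hω.1, le_trans hω.2 (le_of_lt hj0)⟩
      -- upper bound at horizon n+2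
      have hupKey : Pα {ω | notStopped X (Ub Pα X εs) (Lb Pα X εs) (n + 1) ω ∧
            Ub Pα X εs (n + 2) ≤ (S X (n + 2) ω : ℤ)} +
          Pα {ω | hitUpperBy X (Ub Pα X εs) (Lb Pα X εs) (n + 1) ω}
            ≤ ENNReal.ofReal (εs (n + 2)) := by
        have h2 := hUmem.2
        rw [hupEq] at h2
        have hev : {ω | notStopped X (Ub Pα X εs) (Lb Pα X εs) (n + 1) ω ∧
              Ub Pα X εs (n + 2) ≤ (S X (n + 2) ω : ℤ)} =
            {ω | notStopped X U' L' (n + 1) ω ∧ sInf SU ≤ (S X (n + 2) ω : ℤ)} := by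
          ext ω
          rw [← hUval]
          simp only [Set.mem_setOf_eq, hnsEq ω]
        rw [hev]
        exact h2
      have hloKey : Pα {ω | notStopped X (Ub Pα X εs) (Lb Pα X εs) (n + 1) ω ∧
            (S X (n + 2) ω : ℤ) ≤ Lb Pα X εs (n + 2)} +
          Pα {ω | hitLowerBy X (Ub Pα X εs) (Lb Pα X εs) (n + 1) ω}
            ≤ ENNReal.ofReal (εs (n + 2)) := by
        have h2 : Pα {ω | notStopped X U' L' (n + 1) ω ∧ (S X (n + 2) ω : ℤ) ≤ sSup SL} +
            Pα {ω | hitLowerBy X U' L' (n + 1) ω} ≤ ENNReal.ofReal (εs (n + 2)) := hLmem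
        rw [hloEq] at h2
        have hev : {ω | notStopped X (Ub Pα X εs) (Lb Pα X εs) (n + 1) ω ∧
              (S X (n + 2) ω : ℤ) ≤ Lb Pα X εs (n + 2)} =
            {ω | notStopped X U' L' (n + 1) ω ∧ (S X (n + 2) ω : ℤ) ≤ sSup SL} := by
          ext ω
          rw [← hLval]
          simp only [Set.mem_setOf_eq, hnsEq ω]
        rw [hev]
        exact h2
      constructor
      · have hsub : {ω | hitUpperBy X (Ub Pα X εs) (Lb Pα X εs) (n + 2) ω} ⊆
            {ω | notStopped X (Ub Pα X εs) (Lb Pα X εs) (n + 1) ω ∧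
              Ub Pα X εs (n + 2) ≤ (S X (n + 2) ω : ℤ)} ∪
            {ω | hitUpperBy X (Ub Pα X εs) (Lb Pα X εs) (n + 1) ω} := by
          rintro ω ⟨k, h1, h2, hns, hs⟩
          rcases Nat.lt_or_ge k (n + 2) with hk | hk
          · right; exact ⟨k, h1, by omega, hns, hs⟩
          · left
            have hkeq : k = n + 2 := by omega
            subst hkeq
            exact ⟨hns, hs⟩
        calc Pα {ω | hitUpperBy X (Ub Pα X εs) (Lb Pα X εs) (n + 2) ω}
            ≤ Pα ({ω | notStopped X (Ub Pα X εs) (Lb Pα X εs) (n + 1) ω ∧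
                Ub Pα X εs (n + 2) ≤ (S X (n + 2) ω : ℤ)} ∪
              {ω | hitUpperBy X (Ub Pα X εs) (Lb Pα X εs) (n + 1) ω}) := measure_mono hsub
          _ ≤ Pα {ω | notStopped X (Ub Pα X εs) (Lb Pα X εs) (n + 1) ω ∧
                Ub Pα X εs (n + 2) ≤ (S X (n + 2) ω : ℤ)} +
              Pα {ω | hitUpperBy X (Ub Pα X εs) (Lb Pα X εs) (n + 1) ω} := measure_union_le _ _
          _ ≤ ENNReal.ofReal (εs (n + 2)) := hupKey
      · have hsub : {ω | hitLowerBy X (Ub Pα X εs) (Lb Pα X εs) (n + 2) ω} ⊆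
            {ω | notStopped X (Ub Pα X εs) (Lb Pα X εs) (n + 1) ω ∧
              (S X (n + 2) ω : ℤ) ≤ Lb Pα X εs (n + 2)} ∪
            {ω | hitLowerBy X (Ub Pα X εs) (Lb Pα X εs) (n + 1) ω} := by
          rintro ω ⟨k, h1, h2, hns, hs⟩
          rcases Nat.lt_or_ge k (n + 2) with hk | hk
          · right; exact ⟨k, h1, by omega, hns, hs⟩
          · left
            have hkeq : k = n + 2 := by omega
            subst hkeq
            exact ⟨hns, hs⟩
        calc Pα {ω | hitLowerBy X (Ub Pα X εs) (Lb Pα X εs) (n + 2) ω}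
            ≤ Pα ({ω | notStopped X (Ub Pα X εs) (Lb Pα X εs) (n + 1) ω ∧
                (S X (n + 2) ω : ℤ) ≤ Lb Pα X εs (n + 2)} ∪
              {ω | hitLowerBy X (Ub Pα X εs) (Lb Pα X εs) (n + 1) ω}) := measure_mono hsub
          _ ≤ Pα {ω | notStopped X (Ub Pα X εs) (Lb Pα X εs) (n + 1) ω ∧
                (S X (n + 2) ω : ℤ) ≤ Lb Pα X εs (n + 2)} +
              Pα {ω | hitLowerBy X (Ub Pα X εs) (Lb Pα X εs) (n + 1) ω} := measure_union_le _ _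
          _ ≤ ENNReal.ofReal (εs (n + 2)) := hloKey

theorem statement_8 {Ω : Type*} [MeasurableSpace Ω]
    (α ε : ℝ) (hα : α ∈ Set.Ioo (0:ℝ) 1) (hε : ε ∈ Set.Ioo (0:ℝ) 1)
    (εs : ℕ → ℝ) (hεs0 : εs 0 = 0) (hmono : Monotone εs)
    (hnonneg : ∀ n, 0 ≤ εs n) (hlt : ∀ n, εs n < ε)
    (hlim : Filter.Tendsto εs Filter.atTop (nhds ε))
    (P : ℝ → Measure Ω) (X : ℕ → Ω → ℕ)
    (hBern : ∀ p ∈ Set.Icc (0:ℝ) 1, IsBernoulliSeq (P p) p X) :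
    ∀ n : ℕ, 1 ≤ n →
      P α {ω | 1 ≤ tau (P α) X εs ω ∧ tau (P α) X εs ω ≤ n} ≤ 2 * ENNReal.ofReal (εs n) := by
  intro n hn
  obtain ⟨m, rfl⟩ : ∃ m, n = m + 1 := ⟨n - 1, by omega⟩
  have hbdd : ∀ i ω, X i ω ≤ 1 := (hBern α ⟨le_of_lt hα.1, le_of_lt hα.2⟩).bdd
  have key := hit_bound (P α) X εs hbdd hmono hnonneg m
  have hsub : {ω | 1 ≤ tau (P α) X εs ω ∧ tau (P α) X εs ω ≤ m + 1} ⊆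
      {ω | hitUpperBy X (Ub (P α) X εs) (Lb (P α) X εs) (m + 1) ω} ∪
      {ω | hitLowerBy X (Ub (P α) X εs) (Lb (P α) X εs) (m + 1) ω} := by
    rintro ω ⟨h1, h2⟩
    have htau : tau (P α) X εs ω = sInf {k | 1 ≤ k ∧
        ((S X k ω : ℤ) ≤ Lb (P α) X εs k ∨ Ub (P α) X εs k ≤ (S X k ω : ℤ))} := rfl
    have hne : {k | 1 ≤ k ∧
        ((S X k ω : ℤ) ≤ Lb (P α) X εs k ∨ Ub (P α) X εs k ≤ (S X k ω : ℤ))}.Nonempty := by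
      rw [Set.nonempty_iff_ne_empty]
      intro he
      rw [htau, he, Nat.sInf_empty] at h1
      omega
    have hmem := Nat.sInf_mem hne
    rw [← htau] at hmem
    have hns : notStopped X (Ub (P α) X εs) (Lb (P α) X εs) (tau (P α) X εs ω - 1) ω := by
      intro k hk1 hk2
      have hklt : k < tau (P α) X εs ω := by omega
      rw [htau] at hklt
      have hknot := Nat.notMem_of_lt_sInf hklt
      simp only [Set.mem_setOf_eq] at hknot
      push_neg at hknot
      exact hknot hk1
    rcases hmem.2 with h | h
    · right
      exact ⟨tau (P α) X εs ω, h1, h2, hns, h⟩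
    · left
      exact ⟨tau (P α) X εs ω, h1, h2, hns, h⟩
  calc P α {ω | 1 ≤ tau (P α) X εs ω ∧ tau (P α) X εs ω ≤ m + 1}
      ≤ P α ({ω | hitUpperBy X (Ub (P α) X εs) (Lb (P α) X εs) (m + 1) ω} ∪
          {ω | hitLowerBy X (Ub (P α) X εs) (Lb (P α) X εs) (m + 1) ω}) := measure_mono hsub
    _ ≤ P α {ω | hitUpperBy X (Ub (P α) X εs) (Lb (P α) X εs) (m + 1) ω} +
        P α {ω | hitLowerBy X (Ub (P α) X εs) (Lb (P α) X εs) (m + 1) ω} := measure_union_le _ _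
    _ ≤ ENNReal.ofReal (εs (m + 1)) + ENNReal.ofReal (εs (m + 1)) := add_le_add key.1 key.2
    _ = 2 * ENNReal.ofReal (εs (m + 1)) := (two_mul _).symm


end SeqMC
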